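/- Let x* ∈ X be an optimal solution of min{ f(x) : g_k(x) ≤ 0 ∀k, x ∈ X }, let λ* ≥ 0 (componentwise) satisfy inf_{x ∈ X}( f(x) + Σ_k λ*_k g_k(x) ) = f(x*), and set D = β² + L_f + 2‖λ*‖‖L_g‖ + 2C‖L_g‖. If the step size γ > 0 satisfies D + ‖L_g‖·R/√γ − 1/γ ≤ 0, then at every iteration t ≥ 0 of the algorithm, ‖Q(t)‖ ≤ 2‖λ*‖ + R/√γ + C. -/

import Mathlib

open scoped RealInnerProductSpace
open Filter Topology Set

section AuxLemmas

variable {E : Type*} [NormedAddCommGroup E] [InnerProductSpace ℝ E] [CompleteSpace E]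

/-- Gradient inequality for convex differentiable functions. -/
theorem my_grad_convex_le {X : Set E} {h : E → ℝ} {G : E → E}
    (hcv : ConvexOn ℝ X h) (hgrad : ∀ z, HasGradientAt h (G z) z)
    {z w : E} (hz : z ∈ X) (hw : w ∈ X) : h z + ⟪G z, w - z⟫ ≤ h w := by
  set e := w - z with he
  have hline : ∀ θ : ℝ, HasDerivAt (fun θ : ℝ => z + θ • e) e θ := by
    intro θ
    simpa using ((hasDerivAt_id θ).smul_const e).const_add z
  have hφ : HasDerivAt (fun θ : ℝ => h (z + θ • e)) ⟪G z, e⟫ 0 := by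
    have h2 := (hgrad (z + (0:ℝ) • e)).hasFDerivAt.comp_hasDerivAt 0 (hline 0)
    simp only [zero_smul, add_zero] at h2
    simpa [InnerProductSpace.toDual_apply_apply, Function.comp_def] using h2
  have hslope := hasDerivAt_iff_tendsto_slope.1 hφ
  have hsub : (𝓝[>] (0:ℝ)) ≤ 𝓝[≠] 0 :=
    nhdsWithin_mono 0 (fun θ hθ => ne_of_gt hθ)
  have hslope' : Filter.Tendsto (slope (fun θ : ℝ => h (z + θ • e)) 0)
      (𝓝[>] (0:ℝ)) (𝓝 ⟪G z, e⟫) := hslope.mono_left hsub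
  have hbound : ∀ᶠ θ in 𝓝[>] (0:ℝ),
      slope (fun θ : ℝ => h (z + θ • e)) 0 θ ≤ h w - h z := by
    filter_upwards [Ioc_mem_nhdsGT_of_mem (Set.left_mem_Ico.2 one_pos)] with θ hθ
    have hθ0 : 0 < θ := hθ.1
    have hθ1 : θ ≤ 1 := hθ.2
    have hmem : z + θ • e = (1 - θ) • z + θ • w := by
      rw [he]; module
    have hcx := hcv.2 hz hw (by linarith : (0:ℝ) ≤ 1 - θ) hθ0.le (by ring)
    rw [← hmem] at hcx
    rw [slope_def_field]
    simp only [smul_eq_mul] at hcx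
    rw [sub_zero, div_le_iff₀ hθ0]
    have hz0 : z + (0:ℝ) • e = z := by simp
    rw [hz0]
    nlinarith
  have := le_of_tendsto hslope' hbound
  linarith

/-- Descent lemma for functions with a Lipschitz gradient on a convex set. -/
theorem my_descent {X : Set E} (hX : Convex ℝ X) {h : E → ℝ} {G : E → E} {L : ℝ}
    (hgrad : ∀ z, HasGradientAt h (G z) z) (hL : 0 ≤ L)
    (hlip : ∀ a ∈ X, ∀ b ∈ X, ‖G a - G b‖ ≤ L * ‖a - b‖)
    {z w : E} (hz : z ∈ X) (hw : w ∈ X) :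
    h w ≤ h z + ⟪G z, w - z⟫ + L / 2 * ‖w - z‖ ^ 2 := by
  set e := w - z with he
  have hmemX : ∀ θ ∈ Icc (0:ℝ) 1, z + θ • e ∈ X := by
    intro θ hθ
    have : z + θ • e = (1 - θ) • z + θ • w := by rw [he]; module
    rw [this]
    exact hX hz hw (by linarith [hθ.2]) hθ.1 (by ring)
  have hline : ∀ θ : ℝ, HasDerivAt (fun θ : ℝ => z + θ • e) e θ := by
    intro θ
    simpa using ((hasDerivAt_id θ).smul_const e).const_add z
  set φ' : ℝ → ℝ := fun θ => ⟪G (z + θ • e), e⟫ with hφ'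
  have hder : ∀ θ ∈ uIcc (0:ℝ) 1, HasDerivAt (fun θ : ℝ => h (z + θ • e)) (φ' θ) θ := by
    intro θ _
    have h2 := (hgrad (z + θ • e)).hasFDerivAt.comp_hasDerivAt θ (hline θ)
    simpa [InnerProductSpace.toDual_apply_apply, Function.comp_def] using h2
  have hcont : ContinuousOn φ' (uIcc (0:ℝ) 1) := by
    have hGlip : LipschitzOnWith (Real.toNNReal (L * ‖e‖))
        (fun θ : ℝ => G (z + θ • e)) (Icc (0:ℝ) 1) := by
      rw [lipschitzOnWith_iff_dist_le_mul]
      intro θ1 h1 θ2 h2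
      rw [dist_eq_norm, dist_eq_norm]
      have : (z + θ1 • e) - (z + θ2 • e) = (θ1 - θ2) • e := by module
      calc ‖G (z + θ1 • e) - G (z + θ2 • e)‖
          ≤ L * ‖(z + θ1 • e) - (z + θ2 • e)‖ := hlip _ (hmemX _ h1) _ (hmemX _ h2)
        _ = L * ‖e‖ * ‖θ1 - θ2‖ := by
            rw [this, norm_smul]; simp [Real.norm_eq_abs]; ring
        _ ≤ Real.toNNReal (L * ‖e‖) * ‖θ1 - θ2‖ := by
            gcongr
            exact Real.le_coe_toNNReal _
    have : ContinuousOn (fun θ : ℝ => G (z + θ • e)) (Icc (0:ℝ) 1) :=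
      hGlip.continuousOn
    rw [uIcc_of_le (by norm_num : (0:ℝ) ≤ 1)]
    exact (this.inner continuousOn_const)
  have hint : IntervalIntegrable φ' MeasureTheory.volume 0 1 :=
    hcont.intervalIntegrable
  have hftc := intervalIntegral.integral_eq_sub_of_hasDerivAt hder hint
  simp only [zero_smul, add_zero, one_smul] at hftc
  have hub : ∀ θ ∈ Icc (0:ℝ) 1, φ' θ ≤ ⟪G z, e⟫ + L * ‖e‖ ^ 2 * θ := by
    intro θ hθ
    have h1 : φ' θ - ⟪G z, e⟫ = ⟪G (z + θ • e) - G z, e⟫ := by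
      rw [hφ', inner_sub_left]
    have h2 : ⟪G (z + θ • e) - G z, e⟫ ≤ ‖G (z + θ • e) - G z‖ * ‖e‖ :=
      real_inner_le_norm _ _
    have h3 : ‖G (z + θ • e) - G z‖ ≤ L * (θ * ‖e‖) := by
      have := hlip _ (hmemX θ hθ) _ hz
      simpa [norm_smul, Real.norm_eq_abs, abs_of_nonneg hθ.1] using this
    nlinarith [norm_nonneg e, norm_nonneg (G (z + θ • e) - G z), hθ.1]
  have hmono : (∫ θ in (0:ℝ)..1, φ' θ) ≤ ∫ θ in (0:ℝ)..1, (⟪G z, e⟫ + L * ‖e‖ ^ 2 * θ) := by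
    apply intervalIntegral.integral_mono_on (by norm_num) hint
    · exact (continuousOn_const.add ((continuousOn_const.mul continuousOn_id))).intervalIntegrable
        |>.mono_set (by rw [uIcc_of_le] <;> norm_num)
    · exact hub
  have hval : (∫ θ in (0:ℝ)..1, (⟪G z, e⟫ + L * ‖e‖ ^ 2 * θ)) = ⟪G z, e⟫ + L * ‖e‖ ^ 2 / 2 := by
    rw [intervalIntegral.integral_add intervalIntegrable_const
      (Continuous.intervalIntegrable (by continuity :
        Continuous fun θ : ℝ => L * ‖e‖ ^ 2 * θ) 0 1)]
    simp only [intervalIntegral.integral_const, smul_eq_mul]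
    rw [intervalIntegral.integral_const_mul, integral_id]
    ring
  have hwz : z + e = w := by rw [he]; abel
  rw [hwz] at hftc
  linarith [hmono.trans_eq hval, hftc.symm.trans_le hmono |>.trans_eq hval]

/-- Variational inequality for metric projection onto a convex set. -/
theorem my_proj_vi {X : Set E} (hX : Convex ℝ X) {p v : E} (hv : v ∈ X)
    (hmin : ∀ y ∈ X, ‖v - p‖ ≤ ‖y - p‖) {y : E} (hy : y ∈ X) :
    ⟪p - v, y - v⟫ ≤ 0 := by
  by_contra hI
  push_neg at hI
  set I : ℝ := ⟪p - v, y - v⟫ with hIdef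
  set N : ℝ := ‖y - v‖ ^ 2 with hN
  have hN0 : 0 ≤ N := by positivity
  set θ : ℝ := min 1 (I / (N + 1)) with hθdef
  have hθpos : 0 < θ := lt_min one_pos (div_pos hI (by linarith))
  have hθ1 : θ ≤ 1 := min_le_left _ _
  have hmem : v + θ • (y - v) ∈ X := by
    have : v + θ • (y - v) = (1 - θ) • v + θ • y := by module
    rw [this]
    exact hX hv hy (by linarith) hθpos.le (by ring)
  have h1 : ‖v - p‖ ≤ ‖v + θ • (y - v) - p‖ := hmin _ hmem
  have h2 : ‖v + θ • (y - v) - p‖ ^ 2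
      = ‖v - p‖ ^ 2 + 2 * (θ * (-I)) + θ ^ 2 * N := by
    have hre : v + θ • (y - v) - p = (v - p) + θ • (y - v) := by module
    rw [hre, norm_add_sq_real, real_inner_smul_right, norm_smul]
    have : ⟪v - p, y - v⟫ = -I := by
      rw [hIdef, ← inner_neg_left]; congr 1; module
    rw [this]
    simp [Real.norm_eq_abs, abs_of_nonneg hθpos.le, hN]
    ring
  have h3 : ‖v - p‖ ^ 2 ≤ ‖v + θ • (y - v) - p‖ ^ 2 := by
    apply pow_le_pow_left₀ (norm_nonneg _) h1
  have hθN : θ * N ≤ I := by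
    have h4 : θ ≤ I / (N + 1) := min_le_right _ _
    have h5 : θ * N ≤ I / (N + 1) * N := by
      apply mul_le_mul_of_nonneg_right h4 hN0
    calc θ * N ≤ I / (N + 1) * N := h5
      _ ≤ I := by
          rw [div_mul_eq_mul_div, div_le_iff₀ (by linarith)]
          nlinarith
  nlinarith [sq_nonneg θ]

/-- Scalar drift inequality for the virtual queue update. -/
theorem my_drift (q gv : ℝ) : (max (-gv) (q + gv)) ^ 2 ≤ q ^ 2 + 2 * q * gv + 2 * gv ^ 2 := by
  rcases max_cases (-gv) (q + gv) with ⟨h1, h2⟩ | ⟨h1, h2⟩ <;> rw [h1] <;>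
    nlinarith [sq_nonneg (q + gv), sq_nonneg q]

/-- Norm squared as a sum of squares in Euclidean space. -/
theorem my_norm_sq {m : ℕ} (a : EuclideanSpace ℝ (Fin m)) : ‖a‖ ^ 2 = ∑ k, a k ^ 2 := by
  rw [← real_inner_self_eq_norm_sq]
  simp only [PiLp.inner_apply, RCLike.inner_apply, sq, conj_trivial]

theorem my_inner_sum {m : ℕ} (a b : EuclideanSpace ℝ (Fin m)) : ⟪a, b⟫ = ∑ k, a k * b k := by
  simp [PiLp.inner_apply, RCLike.inner_apply, mul_comm]

end AuxLemmas

/-- The stacked constraint vector `g(x) = (g_1(x), …, g_m(x))` as an element of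
Euclidean space `ℝ^m`. -/
noncomputable def gvec {n m : ℕ} (g : Fin m → EuclideanSpace ℝ (Fin n) → ℝ)
    (x : EuclideanSpace ℝ (Fin n)) : EuclideanSpace ℝ (Fin m) :=
  WithLp.toLp 2 (fun k => g k x)

set_option maxHeartbeats 2000000 in
/-- Uniform bound on the virtual queue norm (Lemma 7, part 1 of the paper).
Indexing convention: `x 0` denotes the initial point `x(−1)` and `x (t+1)`
denotes the iterate `x(t)`; thus at iteration `t` of the paper,
`x(t) = x (t+1)`, `x(t−1) = x t`, and `Q(t) = Q t`. -/
theorem virtual_queue_norm_uniform_bound {n m : ℕ}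
    (X : Set (EuclideanSpace ℝ (Fin n)))
    (hXne : X.Nonempty) (hXcv : Convex ℝ X) (hXcp : IsCompact X)
    (R : ℝ) (hR : ∀ z ∈ X, ∀ w ∈ X, ‖z - w‖ ≤ R)
    (f : EuclideanSpace ℝ (Fin n) → ℝ)
    (Gf : EuclideanSpace ℝ (Fin n) → EuclideanSpace ℝ (Fin n))
    (g : Fin m → EuclideanSpace ℝ (Fin n) → ℝ)
    (Gg : Fin m → EuclideanSpace ℝ (Fin n) → EuclideanSpace ℝ (Fin n))
    (Lf : ℝ) (Lg : EuclideanSpace ℝ (Fin m)) (β C : ℝ)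
    (hf : ConvexOn ℝ X f)
    (hfd : ∀ z, HasGradientAt f (Gf z) z)
    (hLf : 0 ≤ Lf)
    (hGfLip : ∀ z ∈ X, ∀ w ∈ X, ‖Gf z - Gf w‖ ≤ Lf * ‖z - w‖)
    (hg : ∀ k, ConvexOn ℝ X (g k))
    (hgd : ∀ (k : Fin m) z, HasGradientAt (g k) (Gg k z) z)
    (hLg : ∀ k, 0 ≤ Lg k)
    (hGgLip : ∀ (k : Fin m), ∀ z ∈ X, ∀ w ∈ X, ‖Gg k z - Gg k w‖ ≤ Lg k * ‖z - w‖)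
    (hgLip : ∀ z ∈ X, ∀ w ∈ X, ‖gvec g z - gvec g w‖ ≤ β * ‖z - w‖)
    (hgC : ∀ z ∈ X, ‖gvec g z‖ ≤ C)
    (xstar : EuclideanSpace ℝ (Fin n)) (hxs : xstar ∈ X)
    (hxsFeas : ∀ k, g k xstar ≤ 0)
    (hxsOpt : ∀ z ∈ X, (∀ k, g k z ≤ 0) → f xstar ≤ f z)
    (lam : EuclideanSpace ℝ (Fin m)) (hlam : ∀ k, 0 ≤ lam k)
    (hduality : IsGLB ((fun z => f z + ∑ k, lam k * g k z) '' X) (f xstar))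
    (D : ℝ) (hD : D = β ^ 2 + Lf + 2 * ‖lam‖ * ‖Lg‖ + 2 * C * ‖Lg‖)
    (γ : ℝ) (hγ : 0 < γ)
    (hγcond : D + ‖Lg‖ * R / Real.sqrt γ - 1 / γ ≤ 0)
    (x : ℕ → EuclideanSpace ℝ (Fin n)) (hxX : ∀ t, x t ∈ X)
    (Q : ℕ → EuclideanSpace ℝ (Fin m))
    (hQ0 : ∀ k, Q 0 k = max 0 (-(g k (x 0))))
    (hQr : ∀ (t : ℕ) (k : Fin m),
      Q (t + 1) k = max (-(g k (x (t + 1)))) (Q t k + g k (x (t + 1))))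
    (d : ℕ → EuclideanSpace ℝ (Fin n))
    (hd : ∀ t, d t = Gf (x t) + ∑ k, (Q t k + g k (x t)) • Gg k (x t))
    (hproj : ∀ t, ∀ y ∈ X,
      ‖x (t + 1) - (x t - γ • d t)‖ ≤ ‖y - (x t - γ • d t)‖) :
    ∀ t : ℕ, ‖Q t‖ ≤ 2 * ‖lam‖ + R / Real.sqrt γ + C := by
  have hsγ : 0 < Real.sqrt γ := Real.sqrt_pos.2 hγ
  have hC0 : 0 ≤ C := le_trans (norm_nonneg _) (hgC xstar hxs)
  have hR0 : 0 ≤ R := le_trans (norm_nonneg _) (hR xstar hxs xstar hxs)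
  set r : ℝ := R / Real.sqrt γ with hrdef
  have hr0 : 0 ≤ r := div_nonneg hR0 hsγ.le
  set B : ℝ := 2 * ‖lam‖ + r + C with hBdef
  have hlamnn : (0:ℝ) ≤ ‖lam‖ := norm_nonneg _
  have hCB : C ≤ B := by rw [hBdef]; linarith
  -- basic queue facts
  have hQ0nn : ∀ k, 0 ≤ Q 0 k := fun k => (hQ0 k) ▸ le_max_left _ _
  have hltnn : ∀ s k, 0 ≤ Q s k + g k (x s) := by
    intro s k
    match s with
    | 0 =>
      rw [hQ0 k]
      rcases le_total (g k (x 0)) 0 with h | h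
      · rw [max_eq_right (by linarith)]; linarith
      · rw [max_eq_left (by linarith)]; linarith
    | s + 1 =>
      rw [hQr s k]
      have := le_max_left (-(g k (x (s+1)))) (Q s k + g k (x (s+1)))
      linarith
  have hQg_le : ∀ s k, Q s k + g k (x (s+1)) ≤ Q (s+1) k := by
    intro s k; rw [hQr s k]; exact le_max_right _ _
  have hQ0sq : ‖Q 0‖ ^ 2 ≤ ‖gvec g (x 0)‖ ^ 2 := by
    rw [my_norm_sq, my_norm_sq]
    apply Finset.sum_le_sum
    intro k _
    have hh : (gvec g (x 0)) k = g k (x 0) := rfl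
    rw [hh, hQ0 k]
    rcases le_total (g k (x 0)) 0 with h | h
    · rw [max_eq_right (by linarith)]; rw [neg_pow]; norm_num
    · rw [max_eq_left (by linarith)]
      simpa using sq_nonneg (g k (x 0))
  have hQ0norm : ‖Q 0‖ ≤ C := by
    have h1 : ‖Q 0‖ ≤ ‖gvec g (x 0)‖ :=
      (pow_le_pow_iff_left₀ (norm_nonneg _) (norm_nonneg _) two_ne_zero).1 hQ0sq
    exact h1.trans (hgC (x 0) (hxX 0))
  -- the per-step inequality
  have key : ∀ s : ℕ, ‖Q s‖ ≤ B →
      ‖Q (s+1)‖^2/2 - ‖Q s‖^2/2 ≤ (∑ k, lam k * g k (x (s+1)))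
        + (‖xstar - x s‖^2/(2*γ) - ‖xstar - x (s+1)‖^2/(2*γ))
        + (‖gvec g (x (s+1))‖^2/2 - ‖gvec g (x s)‖^2/2) := by
    intro s hQs
    have hS2nn : (0:ℝ) ≤ ‖x (s+1) - x s‖^2 := sq_nonneg _
    -- descent lemmas
    have hdf : f (x (s+1)) ≤ f (x s) + ⟪Gf (x s), x (s+1) - x s⟫
        + Lf/2 * ‖x (s+1) - x s‖^2 :=
      my_descent hXcv hfd hLf hGfLip (hxX s) (hxX (s+1))
    have hdg : ∀ k, g k (x (s+1)) ≤ g k (x s) + ⟪Gg k (x s), x (s+1) - x s⟫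
        + Lg k/2 * ‖x (s+1) - x s‖^2 := fun k =>
      my_descent hXcv (hgd k) (hLg k) (hGgLip k) (hxX s) (hxX (s+1))
    -- convexity
    have hcf : f (x s) + ⟪Gf (x s), xstar - x s⟫ ≤ f xstar :=
      my_grad_convex_le hf hfd (hxX s) hxs
    have hcg : ∀ k, g k (x s) + ⟪Gg k (x s), xstar - x s⟫ ≤ g k xstar := fun k =>
      my_grad_convex_le (hg k) (hgd k) (hxX s) hxs
    -- inner product expansion of d
    have hdin : ∀ w, ⟪d s, w⟫ = ⟪Gf (x s), w⟫
        + ∑ k, (Q s k + g k (x s)) * ⟪Gg k (x s), w⟫ := by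
      intro w
      rw [hd s, inner_add_left, sum_inner]
      simp only [real_inner_smul_left]
    -- projection variational inequality
    have hvi : ⟪(x s - γ • d s) - x (s+1), xstar - x (s+1)⟫ ≤ 0 :=
      my_proj_vi hXcv (hxX (s+1)) (fun y hy => hproj s y hy) hxs
    have hlaw : 2 * ⟪x s - x (s+1), x (s+1) - xstar⟫
        = ‖xstar - x s‖^2 - ‖x (s+1) - x s‖^2 - ‖xstar - x (s+1)‖^2 := by
      have h1 : ‖(x s - x (s+1)) + (x (s+1) - xstar)‖^2
          = ‖x s - x (s+1)‖^2 + 2*⟪x s - x (s+1), x (s+1) - xstar⟫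
            + ‖x (s+1) - xstar‖^2 := norm_add_sq_real _ _
      have h2 : (x s - x (s+1)) + (x (s+1) - xstar) = x s - xstar := by abel
      rw [h2] at h1
      rw [norm_sub_rev xstar (x s), norm_sub_rev xstar (x (s+1)), norm_sub_rev (x (s+1)) (x s)]
      linarith
    have hP : ⟪d s, x (s+1) - xstar⟫
        ≤ (‖xstar - x s‖^2 - ‖xstar - x (s+1)‖^2 - ‖x (s+1) - x s‖^2)/(2*γ) := by
      have h1 : ⟪(x s - γ • d s) - x (s+1), xstar - x (s+1)⟫
          = ⟪x s - x (s+1), xstar - x (s+1)⟫ - γ * ⟪d s, xstar - x (s+1)⟫ := by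
        have hh : (x s - γ • d s) - x (s+1) = (x s - x (s+1)) - γ • d s := by abel
        rw [hh, inner_sub_left, real_inner_smul_left]
      have h2 : ⟪x s - x (s+1), xstar - x (s+1)⟫
          = - ⟪x s - x (s+1), x (s+1) - xstar⟫ := by
        rw [← inner_neg_right]; congr 1; abel
      have h3 : ⟪d s, xstar - x (s+1)⟫ = - ⟪d s, x (s+1) - xstar⟫ := by
        rw [← inner_neg_right]; congr 1; abel
      rw [h1, h2, h3] at hvi
      rw [le_div_iff₀ (by positivity)]
      nlinarith [hvi, hlaw]
    -- weighted sums
    have hg_each : ∀ k, (Q s k + g k (x s)) * g k (x (s+1))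
        ≤ (Q s k + g k (x s)) * g k (x s)
          + (Q s k + g k (x s)) * ⟪Gg k (x s), x (s+1) - x s⟫
          + (Q s k + g k (x s)) * Lg k / 2 * ‖x (s+1) - x s‖^2 := by
      intro k
      have h := mul_le_mul_of_nonneg_left (hdg k) (hltnn s k)
      nlinarith [h]
    have hsum_g : ∑ k, (Q s k + g k (x s)) * g k (x (s+1))
        ≤ ∑ k, (Q s k + g k (x s)) * g k (x s)
          + ∑ k, (Q s k + g k (x s)) * ⟪Gg k (x s), x (s+1) - x s⟫
          + (∑ k, (Q s k + g k (x s)) * Lg k)/2 * ‖x (s+1) - x s‖^2 := by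
      have h := Finset.sum_le_sum (fun k (_ : k ∈ Finset.univ) => hg_each k)
      rw [Finset.sum_add_distrib, Finset.sum_add_distrib] at h
      have h2 : ∑ k, (Q s k + g k (x s)) * Lg k / 2 * ‖x (s+1) - x s‖^2
          = (∑ k, (Q s k + g k (x s)) * Lg k)/2 * ‖x (s+1) - x s‖^2 := by
        rw [← Finset.sum_mul, ← Finset.sum_div]
      linarith [h, h2.le, h2.ge]
    have hc_each : ∀ k, (Q s k + g k (x s)) * g k (x s)
        + (Q s k + g k (x s)) * ⟪Gg k (x s), xstar - x s⟫
        ≤ (Q s k + g k (x s)) * g k xstar := by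
      intro k
      have h := mul_le_mul_of_nonneg_left (hcg k) (hltnn s k)
      nlinarith [h]
    have hsum_c : ∑ k, (Q s k + g k (x s)) * g k (x s)
        + ∑ k, (Q s k + g k (x s)) * ⟪Gg k (x s), xstar - x s⟫ ≤ 0 := by
      have h := Finset.sum_le_sum (fun k (_ : k ∈ Finset.univ) => hc_each k)
      rw [Finset.sum_add_distrib] at h
      have h2 : ∑ k, (Q s k + g k (x s)) * g k xstar ≤ 0 :=
        Finset.sum_nonpos (fun k _ =>
          mul_nonpos_of_nonneg_of_nonpos (hltnn s k) (hxsFeas k))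
      linarith
    -- duality
    have hdual : f xstar ≤ f (x (s+1)) + ∑ k, lam k * g k (x (s+1)) :=
      hduality.1 ⟨x (s+1), hxX (s+1), rfl⟩
    -- Lipschitz coefficient bound
    have hLgnn : (0:ℝ) ≤ ‖Lg‖ := norm_nonneg _
    have hSL : ∑ k, (Q s k + g k (x s)) * Lg k ≤ (B + C) * ‖Lg‖ := by
      have h1 : ∑ k, (Q s k + g k (x s)) * Lg k = ⟪Q s + gvec g (x s), Lg⟫ := by
        rw [my_inner_sum]
        apply Finset.sum_congr rfl
        intro k _
        have hh : (Q s + gvec g (x s)) k = Q s k + g k (x s) := rfl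
        rw [hh]
      have h2 : ⟪Q s + gvec g (x s), Lg⟫ ≤ ‖Q s + gvec g (x s)‖ * ‖Lg‖ :=
        real_inner_le_norm _ _
      have h3 : ‖Q s + gvec g (x s)‖ ≤ ‖Q s‖ + ‖gvec g (x s)‖ := norm_add_le _ _
      have h4 : ‖gvec g (x s)‖ ≤ C := hgC (x s) (hxX s)
      have h5 : ‖Q s + gvec g (x s)‖ * ‖Lg‖ ≤ (B + C) * ‖Lg‖ := by
        apply mul_le_mul_of_nonneg_right _ hLgnn
        linarith
      linarith
    have hcoef : Lf + (∑ k, (Q s k + g k (x s)) * Lg k) + β^2 ≤ 1/γ := by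
      have h1 : ‖Lg‖ * R / Real.sqrt γ = r * ‖Lg‖ := by
        rw [hrdef]; ring
      have h2 : (B + C) * ‖Lg‖ = 2*‖lam‖*‖Lg‖ + r*‖Lg‖ + 2*C*‖Lg‖ := by
        rw [hBdef]; ring
      rw [hD] at hγcond
      linarith
    -- drift inequality
    have hdrift : ‖Q (s+1)‖^2 ≤ ‖Q s‖^2 + 2*(∑ k, Q s k * g k (x (s+1)))
        + 2*(∑ k, (g k (x (s+1)))^2) := by
      rw [my_norm_sq (Q (s+1)), my_norm_sq (Q s)]
      have h1 : ∀ k : Fin m, (Q (s+1) k)^2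
          ≤ (Q s k)^2 + 2*(Q s k * g k (x (s+1))) + 2*(g k (x (s+1)))^2 := by
        intro k
        rw [hQr s k]
        have := my_drift (Q s k) (g k (x (s+1)))
        nlinarith [this]
      have h2 := Finset.sum_le_sum (fun k (_ : k ∈ Finset.univ) => h1 k)
      rw [Finset.sum_add_distrib, Finset.sum_add_distrib, ← Finset.mul_sum,
        ← Finset.mul_sum] at h2
      exact h2
    -- rewrite sum Q*g
    have hlink : ∑ k, Q s k * g k (x (s+1))
        = ∑ k, (Q s k + g k (x s)) * g k (x (s+1)) - ∑ k, g k (x s) * g k (x (s+1)) := by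
      rw [← Finset.sum_sub_distrib]
      apply Finset.sum_congr rfl
      intro k _
      ring
    -- algebraic identity for the g-terms
    have hgid : ∑ k, (g k (x (s+1)))^2 - ∑ k, g k (x s) * g k (x (s+1))
        = ‖gvec g (x (s+1))‖^2/2 - ‖gvec g (x s)‖^2/2
          + ‖gvec g (x (s+1)) - gvec g (x s)‖^2/2 := by
      rw [my_norm_sq, my_norm_sq, my_norm_sq]
      rw [← Finset.sum_sub_distrib, Finset.sum_div, Finset.sum_div, Finset.sum_div,
        ← Finset.sum_sub_distrib, ← Finset.sum_add_distrib]
      apply Finset.sum_congr rfl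
      intro k _
      have h1 : (gvec g (x (s+1))) k = g k (x (s+1)) := rfl
      have h2 : (gvec g (x s)) k = g k (x s) := rfl
      have h3 : (gvec g (x (s+1)) - gvec g (x s)) k = g k (x (s+1)) - g k (x s) := rfl
      rw [h1, h2, h3]; ring
    have hglip2 : ‖gvec g (x (s+1)) - gvec g (x s)‖^2 ≤ β^2 * ‖x (s+1) - x s‖^2 := by
      have h1 : ‖gvec g (x (s+1)) - gvec g (x s)‖ ≤ β * ‖x (s+1) - x s‖ :=
        hgLip (x (s+1)) (hxX (s+1)) (x s) (hxX s)
      have h2 := pow_le_pow_left₀ (norm_nonneg _) h1 2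
      rw [mul_pow] at h2
      exact h2
    -- quadratic terms
    have hq1 : (Lf + (∑ k, (Q s k + g k (x s)) * Lg k)) * ‖x (s+1) - x s‖^2
        + β^2 * ‖x (s+1) - x s‖^2 ≤ (1/γ) * ‖x (s+1) - x s‖^2 := by
      have := mul_le_mul_of_nonneg_right hcoef hS2nn
      nlinarith [this]
    have hq2 : ‖xstar - x s‖^2/(2*γ) - ‖xstar - x (s+1)‖^2/(2*γ)
        - (‖xstar - x s‖^2 - ‖xstar - x (s+1)‖^2 - ‖x (s+1) - x s‖^2)/(2*γ)
        = (1/γ) * ‖x (s+1) - x s‖^2 / 2 := by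
      field_simp
      ring
    -- chain of inequalities
    have hchain : ∑ k, (Q s k + g k (x s)) * g k (x (s+1))
        ≤ (∑ k, lam k * g k (x (s+1)))
          + (‖xstar - x s‖^2 - ‖xstar - x (s+1)‖^2 - ‖x (s+1) - x s‖^2)/(2*γ)
          + (Lf + (∑ k, (Q s k + g k (x s)) * Lg k))/2 * ‖x (s+1) - x s‖^2 := by
      have e1 := hdin (x (s+1) - x s)
      have e2 := hdin (xstar - x s)
      have e3 : ⟪d s, x (s+1) - xstar⟫ = ⟪d s, x (s+1) - x s⟫ - ⟪d s, xstar - x s⟫ := by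
        rw [← inner_sub_right]; congr 1; abel
      linarith [hdf, hsum_g, hcf, hsum_c, hdual, hP]
    linarith [hdrift, hlink.le, hlink.ge, hgid.le, hgid.ge, hglip2, hchain, hq1,
      hq2.le, hq2.ge]
  -- main strong induction
  intro t
  induction t using Nat.strong_induction_on with
  | _ t ih =>
    rcases t with _ | N
    · exact hQ0norm.trans hCB
    · have hstep : ∀ s ∈ Finset.range (N+1),
          ‖Q (s+1)‖^2/2 - ‖Q s‖^2/2 ≤ (∑ k, lam k * g k (x (s+1)))
            + (‖xstar - x s‖^2/(2*γ) - ‖xstar - x (s+1)‖^2/(2*γ))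
            + (‖gvec g (x (s+1))‖^2/2 - ‖gvec g (x s)‖^2/2) :=
        fun s hs => key s (ih s (Finset.mem_range.1 hs))
      have hsum := Finset.sum_le_sum hstep
      rw [Finset.sum_range_sub (fun s => ‖Q s‖^2/2)] at hsum
      have hsplit : ∑ s ∈ Finset.range (N+1), ((∑ k, lam k * g k (x (s+1)))
            + (‖xstar - x s‖^2/(2*γ) - ‖xstar - x (s+1)‖^2/(2*γ))
            + (‖gvec g (x (s+1))‖^2/2 - ‖gvec g (x s)‖^2/2))
          = (∑ s ∈ Finset.range (N+1), ∑ k, lam k * g k (x (s+1)))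
            + (‖xstar - x 0‖^2/(2*γ) - ‖xstar - x (N+1)‖^2/(2*γ))
            + (‖gvec g (x (N+1))‖^2/2 - ‖gvec g (x 0)‖^2/2) := by
        rw [Finset.sum_add_distrib, Finset.sum_add_distrib,
          Finset.sum_range_sub' (fun s => ‖xstar - x s‖^2/(2*γ)),
          Finset.sum_range_sub (fun s => ‖gvec g (x s)‖^2/2)]
      rw [hsplit] at hsum
      have hlamsum : ∑ s ∈ Finset.range (N+1), ∑ k, lam k * g k (x (s+1))
          ≤ ‖lam‖ * ‖Q (N+1)‖ := by
        rw [Finset.sum_comm]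
        have h1 : ∀ k : Fin m, ∑ s ∈ Finset.range (N+1), lam k * g k (x (s+1))
            ≤ lam k * Q (N+1) k := by
          intro k
          rw [← Finset.mul_sum]
          apply mul_le_mul_of_nonneg_left _ (hlam k)
          have h2 : ∑ s ∈ Finset.range (N+1), g k (x (s+1))
              ≤ ∑ s ∈ Finset.range (N+1), (Q (s+1) k - Q s k) :=
            Finset.sum_le_sum (fun s _ => by linarith [hQg_le s k])
          rw [Finset.sum_range_sub (fun s => Q s k)] at h2
          linarith [hQ0nn k]
        have h3 := Finset.sum_le_sum (fun k (_ : k ∈ Finset.univ) => h1 k)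
        have h4 : ∑ k, lam k * Q (N+1) k = ⟪lam, Q (N+1)⟫ := (my_inner_sum _ _).symm
        have h5 := real_inner_le_norm lam (Q (N+1))
        linarith
      have hb1 : ‖xstar - x 0‖^2/(2*γ) ≤ R^2/(2*γ) := by
        gcongr
        exact hR xstar hxs (x 0) (hxX 0)
      have hb2 : 0 ≤ ‖xstar - x (N+1)‖^2/(2*γ) := by positivity
      have hc1 : ‖gvec g (x (N+1))‖^2 ≤ C^2 :=
        pow_le_pow_left₀ (norm_nonneg _) (hgC _ (hxX _)) 2
      have hrsq : r^2 = R^2/γ := by rw [hrdef, div_pow, Real.sq_sqrt hγ.le]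
      have hRr : R^2/(2*γ) = r^2/2 := by rw [hrsq]; ring
      have hZ0 : 0 ≤ ‖Q (N+1)‖ := norm_nonneg _
      have hfin : ‖Q (N+1)‖^2 ≤ 2*‖lam‖*‖Q (N+1)‖ + r^2 + C^2 := by
        linarith [hsum, hQ0sq, hb1, hb2, hc1, hlamsum, hRr.le, hRr.ge]
      by_contra hcon
      push_neg at hcon
      rw [hBdef] at hcon
      nlinarith [hfin,
        mul_pos (show 0 < ‖Q (N+1)‖ - (2*‖lam‖ + r + C) by linarith)
          (show 0 < ‖Q (N+1)‖ by linarith),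
        mul_nonneg hr0 hC0,
        mul_nonneg (mul_nonneg (by norm_num : (0:ℝ) ≤ 2) hlamnn) (add_nonneg hr0 hC0)]
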